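/- Let d ∈ {2,3} and ω ∈ C²(ℝ^d \ {0}, ℝ), and assume there exist i ≠ j in {1,…,d} such that {1, ∂_iω, ∂_jω} are linearly independent in C¹(ℝ^d \ {0}). Let g ∈ C¹(ℝ^d \ {0}, ℝ) be such that for all v, v*, v', v*' ∈ ℝ^d with v + v* = v' + v*' and ω(v) + ω(v*) = ω(v') + ω(v*'), one has g(v) + g(v*) = g(v') + g(v*'). Then there exist a, c ∈ ℝ and b ∈ ℝ^d such that g(v) = a + b·v + c ω(v) for all v ∈ ℝ^d \ {0}. -/

import Mathlib

open Filter Topology ContinuousLinearMap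

lemma aux_span {E : Type*} [NormedAddCommGroup E] [NormedSpace ℝ E]
    (n f : E →L[ℝ] ℝ) (x0 : E) (hx0 : n x0 ≠ 0)
    (h : ∀ δ, n δ = 0 → f δ = 0) : ∃ c : ℝ, ∀ y, f y = c * n y := by
  set e := (n x0)⁻¹ • x0 with he
  have hne : n e = 1 := by
    simp [he, map_smul, inv_mul_cancel₀ hx0]
  refine ⟨f e, fun y => ?_⟩
  have h1 : n (y - n y • e) = 0 := by
    simp [map_sub, map_smul, hne]
  have h2 := h _ h1
  simp only [map_sub, map_smul, smul_eq_mul, sub_eq_zero] at h2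
  rw [h2]; ring

lemma aux_curve {d : ℕ} (ω g : (Fin d → ℝ) → ℝ)
    (hω : ContDiffOn ℝ 2 ω {v : Fin d → ℝ | v ≠ 0})
    (hg : ContDiffOn ℝ 1 g {v : Fin d → ℝ | v ≠ 0})
    (hcoll : ∀ v w v' w' : Fin d → ℝ,
      v + w = v' + w' → ω v + ω w = ω v' + ω w' → g v + g w = g v' + g w')
    (v w : Fin d → ℝ) (hv : v ≠ 0) (hw : w ≠ 0) (δ e : Fin d → ℝ)
    (hδ : fderiv ℝ ω v δ - fderiv ℝ ω w δ = 0)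
    (he : fderiv ℝ ω v e - fderiv ℝ ω w e = 1) :
    fderiv ℝ g v δ = fderiv ℝ g w δ := by
  have hSo : IsOpen {v : Fin d → ℝ | v ≠ 0} := isOpen_compl_singleton
  have hvS : {v : Fin d → ℝ | v ≠ 0} ∈ 𝓝 v := hSo.mem_nhds hv
  have hwS : {v : Fin d → ℝ | v ≠ 0} ∈ 𝓝 w := hSo.mem_nhds hw
  have hωv : HasStrictFDerivAt ω (fderiv ℝ ω v) v :=
    (hω.contDiffAt hvS).hasStrictFDerivAt (by norm_num)
  have hωw : HasStrictFDerivAt ω (fderiv ℝ ω w) w :=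
    (hω.contDiffAt hwS).hasStrictFDerivAt (by norm_num)
  have hgv : HasFDerivAt g (fderiv ℝ g v) v :=
    ((hg.contDiffAt hvS).differentiableAt one_ne_zero).hasFDerivAt
  have hgw : HasFDerivAt g (fderiv ℝ g w) w :=
    ((hg.contDiffAt hwS).differentiableAt one_ne_zero).hasFDerivAt
  set s : Fin d → ℝ := v + w with hs
  set ψ : (Fin d → ℝ) → ℝ := fun x => ω x + ω (s - x) with hψdef
  set n : (Fin d → ℝ) →L[ℝ] ℝ := fderiv ℝ ω v - fderiv ℝ ω w with hn
  -- ψ has strict derivative n at v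
  have hsub : HasStrictFDerivAt (fun x : Fin d → ℝ => s - x)
      (-(ContinuousLinearMap.id ℝ (Fin d → ℝ))) v := by
    exact (hasStrictFDerivAt_id v).const_sub s
  have hsv : s - v = w := by simp [hs]
  have h2 : HasStrictFDerivAt (fun x : Fin d → ℝ => ω (s - x))
      ((fderiv ℝ ω w).comp (-(ContinuousLinearMap.id ℝ (Fin d → ℝ)))) v := by
    refine HasStrictFDerivAt.comp v ?_ hsub
    rw [hsv]; exact hωw
  have hψ : HasStrictFDerivAt ψ n v := by
    have := hωv.add h2
    refine this.congr_fderiv ?_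
    ext y
    simp [hn, ContinuousLinearMap.sub_apply, sub_eq_add_neg]
  have hnδ : n δ = 0 := by simp [hn, ContinuousLinearMap.sub_apply, hδ]
  have hne : n e = 1 := by simp [hn, ContinuousLinearMap.sub_apply, he]
  -- the affine map A and linear map L
  set L : (ℝ × ℝ) →L[ℝ] (Fin d → ℝ) :=
    (ContinuousLinearMap.fst ℝ ℝ ℝ).smulRight δ +
      (ContinuousLinearMap.snd ℝ ℝ ℝ).smulRight e with hL
  have hLap : ∀ p : ℝ × ℝ, L p = p.1 • δ + p.2 • e := by
    intro p; simp [hL]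
  set A : ℝ × ℝ → (Fin d → ℝ) := fun p => v + L p with hA
  have hA0 : A (0, 0) = v := by simp [hA, hLap]
  have hAd : HasStrictFDerivAt A L (0, 0) := L.hasStrictFDerivAt.const_add v
  set Φ : ℝ × ℝ → ℝ × ℝ := fun p => (p.1, ψ (A p)) with hΦdef
  have hψA : HasStrictFDerivAt (fun p => ψ (A p)) (n.comp L) (0, 0) := by
    refine HasStrictFDerivAt.comp (0,0) ?_ hAd
    rw [hA0]; exact hψ
  have hΦd : HasStrictFDerivAt Φ
      ((ContinuousLinearMap.fst ℝ ℝ ℝ).prod (n.comp L)) (0, 0) :=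
    HasStrictFDerivAt.prodMk (ContinuousLinearMap.fst ℝ ℝ ℝ).hasStrictFDerivAt hψA
  have hkey : (ContinuousLinearMap.fst ℝ ℝ ℝ).prod (n.comp L)
      = ((ContinuousLinearEquiv.refl ℝ (ℝ × ℝ)) : (ℝ × ℝ) →L[ℝ] (ℝ × ℝ)) := by
    ext p <;> simp [hLap, hnδ, hne]
  rw [hkey] at hΦd
  set inv : ℝ × ℝ → ℝ × ℝ :=
    hΦd.localInverse Φ (ContinuousLinearEquiv.refl ℝ (ℝ × ℝ)) (0,0) with hinv
  have hA0' : A 0 = v := hA0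
  have hΦ00 : Φ (0, 0) = (0, ψ v) := by simp [hΦdef, hA0, hA0']
  have hRI : ∀ᶠ y in 𝓝 ((0 : ℝ), ψ v), Φ (inv y) = y := by
    rw [← hΦ00]; exact hΦd.eventually_right_inverse
  set γ : ℝ → ℝ × ℝ := fun t => inv (t, ψ v) with hγ
  have htend : Tendsto (fun t : ℝ => (t, ψ v)) (𝓝 0) (𝓝 ((0 : ℝ), ψ v)) := by
    have : Continuous (fun t : ℝ => (t, ψ v)) := by fun_prop
    simpa using this.tendsto 0
  have hEv : ∀ᶠ t in 𝓝 (0 : ℝ), Φ (γ t) = (t, ψ v) := htend.eventually hRI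
  have hγ0 : γ 0 = (0, 0) := by
    have := hΦd.localInverse_apply_image (f := Φ)
      (f' := ContinuousLinearEquiv.refl ℝ (ℝ × ℝ)) (a := ((0:ℝ), (0:ℝ)))
    rw [hΦ00] at this
    simpa [hγ, hinv] using this
  set x : ℝ → (Fin d → ℝ) := fun t => A (γ t) with hx
  have hx0 : x 0 = v := by rw [hx]; simp only [hγ0, hA0]
  -- derivative of γ at 0
  have hinv' : HasStrictFDerivAt inv
      (((ContinuousLinearEquiv.refl ℝ (ℝ × ℝ)).symm : (ℝ × ℝ) ≃L[ℝ] (ℝ × ℝ)) :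
        (ℝ × ℝ) →L[ℝ] (ℝ × ℝ)) ((0 : ℝ), ψ v) := by
    rw [← hΦ00]; exact hΦd.to_localInverse
  have hline : HasDerivAt (fun t : ℝ => ((t : ℝ), ψ v)) ((1 : ℝ), (0 : ℝ)) 0 :=
    HasDerivAt.prodMk (hasDerivAt_id (0:ℝ)) (hasDerivAt_const (0:ℝ) _)
  have hγ' : HasDerivAt γ ((1 : ℝ), (0 : ℝ)) 0 := by
    have := hinv'.hasFDerivAt.comp_hasDerivAt 0 hline
    exact this
  have hxd : HasDerivAt x δ 0 := by
    have hAd' : HasFDerivAt A L (γ 0) := L.hasFDerivAt.const_add v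
    have := hAd'.comp_hasDerivAt 0 hγ'
    exact this.congr_deriv (by simp [hLap])
  -- the two compositions
  have h1 : HasDerivAt (fun t => g (x t)) (fderiv ℝ g v δ) 0 := by
    have : HasFDerivAt g (fderiv ℝ g v) (x 0) := by rw [hx0]; exact hgv
    exact this.comp_hasDerivAt 0 hxd
  have hx2 : HasDerivAt (fun t => s - x t) (-δ) 0 := hxd.const_sub s
  have h2' : HasDerivAt (fun t => g (s - x t)) (fderiv ℝ g w (-δ)) 0 := by
    have : HasFDerivAt g (fderiv ℝ g w) (s - x 0) := by rw [hx0, hsv]; exact hgw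
    exact this.comp_hasDerivAt 0 hx2
  have hφd : HasDerivAt (fun t => g (x t) + g (s - x t))
      (fderiv ℝ g v δ + fderiv ℝ g w (-δ)) 0 := h1.add h2'
  have hconst : (fun t => g (x t) + g (s - x t)) =ᶠ[𝓝 (0 : ℝ)]
      (fun _ => g v + g w) := by
    filter_upwards [hEv] with t ht
    have hsum : x t + (s - x t) = v + w := by rw [hs]; abel
    have hψx : ψ (x t) = ψ v := congrArg Prod.snd ht
    have hωsum : ω (x t) + ω (s - x t) = ω v + ω w := by
      have h1' : ω (x t) + ω (s - x t) = ψ (x t) := rfl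
      have h2'' : ψ v = ω v + ω w := by rw [hψdef]; simp only []; rw [hsv]
      rw [h1', hψx, h2'']
    exact hcoll (x t) (s - x t) v w hsum hωsum
  have hφ0 : HasDerivAt (fun t => g (x t) + g (s - x t)) 0 0 :=
    (hasDerivAt_const 0 (g v + g w)).congr_of_eventuallyEq hconst
  have := hφd.unique hφ0
  have hmn : fderiv ℝ g w (-δ) = -(fderiv ℝ g w δ) := by simp
  rw [hmn] at this
  linarith

theorem stmt_6 (d : ℕ) (hd : d = 2 ∨ d = 3) (ω g : (Fin d → ℝ) → ℝ)
    (hω : ContDiffOn ℝ 2 ω {v : Fin d → ℝ | v ≠ 0})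
    (hg : ContDiffOn ℝ 1 g {v : Fin d → ℝ | v ≠ 0})
    (i j : Fin d) (hij : i ≠ j)
    (hindep : ∀ α β γ : ℝ,
      (∀ v : Fin d → ℝ, v ≠ 0 →
        α + β * fderiv ℝ ω v (Pi.single i 1) + γ * fderiv ℝ ω v (Pi.single j 1) = 0) →
      α = 0 ∧ β = 0 ∧ γ = 0)
    (hcoll : ∀ v w v' w' : Fin d → ℝ,
      v + w = v' + w' → ω v + ω w = ω v' + ω w' → g v + g w = g v' + g w') :
    ∃ (a c : ℝ) (b : Fin d → ℝ), ∀ v : Fin d → ℝ, v ≠ 0 →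
      g v = a + (∑ k, b k * v k) + c * ω v := by
  -- no affine line contains all the gradients of ω
  have L0 : ∀ p m : (Fin d → ℝ) →L[ℝ] ℝ,
      ¬ (∀ z : Fin d → ℝ, z ≠ 0 → ∃ t : ℝ, ∀ y, fderiv ℝ ω z y = p y + t * m y) := by
    intro p m hall
    obtain ⟨β, γ, hβγ, hlin⟩ : ∃ β γ : ℝ, ¬(β = 0 ∧ γ = 0) ∧
        β * m (Pi.single i 1) + γ * m (Pi.single j 1) = 0 := by
      by_cases hmi : m (Pi.single i 1) = 0 ∧ m (Pi.single j 1) = 0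
      · exact ⟨1, 0, by simp, by simp [hmi.1, hmi.2]⟩
      · refine ⟨-(m (Pi.single j 1)), m (Pi.single i 1), ?_, by ring⟩
        rw [not_and_or] at hmi ⊢
        rcases hmi with h | h
        · right; exact h
        · left; simpa using h
    have := hindep (-(β * p (Pi.single i 1) + γ * p (Pi.single j 1))) β γ ?_
    · exact hβγ ⟨this.2.1, this.2.2⟩
    · intro v hv
      obtain ⟨t, ht⟩ := hall v hv
      rw [ht (Pi.single i 1), ht (Pi.single j 1)]
      linear_combination t * hlin
  -- existence of points avoiding any affine line of gradients
  have E2 : ∀ p m : (Fin d → ℝ) →L[ℝ] ℝ,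
      ∃ z : Fin d → ℝ, z ≠ 0 ∧ ∀ t : ℝ, ∃ y, fderiv ℝ ω z y ≠ p y + t * m y := by
    intro p m
    by_contra h
    push_neg at h
    exact L0 p m h
  -- the parallelism lemma
  have ParF : ∀ v w : Fin d → ℝ, v ≠ 0 → w ≠ 0 →
      (∃ y, fderiv ℝ ω v y ≠ fderiv ℝ ω w y) →
      ∃ c : ℝ, ∀ y, fderiv ℝ g v y - fderiv ℝ g w y
        = c * (fderiv ℝ ω v y - fderiv ℝ ω w y) := by
    intro v w hv hw hy
    obtain ⟨y0, hy0⟩ := hy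
    set nn : (Fin d → ℝ) →L[ℝ] ℝ := fderiv ℝ ω v - fderiv ℝ ω w with hnn
    have hny0 : nn y0 ≠ 0 := by
      simp only [hnn, ContinuousLinearMap.sub_apply]
      exact sub_ne_zero.2 hy0
    set e : Fin d → ℝ := (nn y0)⁻¹ • y0 with hedef
    have hne : nn e = 1 := by
      simp [hedef, map_smul, inv_mul_cancel₀ hny0]
    have hperp : ∀ δ', nn δ' = 0 → (fderiv ℝ g v - fderiv ℝ g w) δ' = 0 := by
      intro δ' hδ'
      have hc := aux_curve ω g hω hg hcoll v w hv hw δ' e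
        (by simpa [hnn, ContinuousLinearMap.sub_apply] using hδ')
        (by simpa [hnn, ContinuousLinearMap.sub_apply] using hne)
      simp [ContinuousLinearMap.sub_apply, sub_eq_zero, hc]
    obtain ⟨c, hc⟩ := aux_span nn (fderiv ℝ g v - fderiv ℝ g w) y0 hny0 hperp
    exact ⟨c, fun y => by simpa [hnn, ContinuousLinearMap.sub_apply] using hc y⟩
  -- uniqueness of the slope when the third point is off the line
  have KeyA : ∀ (v w z : Fin d → ℝ) (c c' : ℝ), v ≠ 0 → w ≠ 0 → z ≠ 0 →
      (∀ y, fderiv ℝ g v y - fderiv ℝ g w y = c * (fderiv ℝ ω v y - fderiv ℝ ω w y)) →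
      (∀ y, fderiv ℝ g v y - fderiv ℝ g z y = c' * (fderiv ℝ ω v y - fderiv ℝ ω z y)) →
      (∃ y, fderiv ℝ ω v y ≠ fderiv ℝ ω w y) →
      (∀ t : ℝ, ∃ y, fderiv ℝ ω v y - fderiv ℝ ω z y
        ≠ t * (fderiv ℝ ω v y - fderiv ℝ ω w y)) →
      c = c' := by
    intro v w z c c' hv hw hz hP hP' hy1 hind
    obtain ⟨y1, hy1⟩ := hy1
    have hwz : ∃ y, fderiv ℝ ω w y ≠ fderiv ℝ ω z y := by
      by_contra hcon
      push_neg at hcon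
      obtain ⟨y, hy⟩ := hind 1
      exact hy (by rw [← hcon y]; ring)
    obtain ⟨c'', hc''⟩ := ParF w z hw hz hwz
    have hid : ∀ y, (c' - c'') * (fderiv ℝ ω v y - fderiv ℝ ω z y)
        = (c - c'') * (fderiv ℝ ω v y - fderiv ℝ ω w y) := by
      intro y
      linear_combination hP y + hc'' y - hP' y
    by_cases hcc : c' = c''
    · rw [hcc] at hid
      have h0 : ∀ y, (c - c'') * (fderiv ℝ ω v y - fderiv ℝ ω w y) = 0 := by
        intro y; rw [← hid y]; ring
      have := h0 y1
      rcases mul_eq_zero.1 this with h | h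
      · rw [hcc]; linarith
      · exact absurd (sub_eq_zero.1 h) hy1
    · exfalso
      obtain ⟨y, hy⟩ := hind ((c - c'') / (c' - c''))
      apply hy
      have h := hid y
      have hne0 : c' - c'' ≠ 0 := sub_ne_zero.2 hcc
      rw [div_mul_eq_mul_div, eq_div_iff hne0]
      linear_combination h
  -- uniqueness of the slope for pairs sharing a vertex
  have Key : ∀ (v w z : Fin d → ℝ) (c c' : ℝ), v ≠ 0 → w ≠ 0 → z ≠ 0 →
      (∀ y, fderiv ℝ g v y - fderiv ℝ g w y = c * (fderiv ℝ ω v y - fderiv ℝ ω w y)) →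
      (∀ y, fderiv ℝ g v y - fderiv ℝ g z y = c' * (fderiv ℝ ω v y - fderiv ℝ ω z y)) →
      (∃ y, fderiv ℝ ω v y ≠ fderiv ℝ ω w y) →
      (∃ y, fderiv ℝ ω v y ≠ fderiv ℝ ω z y) →
      c = c' := by
    intro v w z c c' hv hw hz hP hP' hvw hvz
    by_cases hind : ∀ t : ℝ, ∃ y, fderiv ℝ ω v y - fderiv ℝ ω z y
        ≠ t * (fderiv ℝ ω v y - fderiv ℝ ω w y)
    · exact KeyA v w z c c' hv hw hz hP hP' hvw hind
    · push_neg at hind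
      obtain ⟨t, ht⟩ := hind
      obtain ⟨u, hu, hu2⟩ := E2 (fderiv ℝ ω v) (fderiv ℝ ω v - fderiv ℝ ω w)
      have hvu : ∃ y, fderiv ℝ ω v y ≠ fderiv ℝ ω u y := by
        obtain ⟨y, hy⟩ := hu2 0
        exact ⟨y, fun hc => hy (by rw [← hc]; ring)⟩
      have hindu : ∀ t' : ℝ, ∃ y, fderiv ℝ ω v y - fderiv ℝ ω u y
          ≠ t' * (fderiv ℝ ω v y - fderiv ℝ ω w y) := by
        intro t'
        obtain ⟨y, hy⟩ := hu2 (-t')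
        refine ⟨y, fun hc => hy ?_⟩
        simp only [ContinuousLinearMap.sub_apply]
        linarith [hc]
      obtain ⟨c₃, h₃⟩ := ParF v u hv hu hvu
      have e1 : c = c₃ := KeyA v w u c c₃ hv hw hu hP h₃ hvw hindu
      have e2 : c' = c₃ := by
        refine KeyA v z u c' c₃ hv hz hu hP' h₃ hvz ?_
        intro t'
        obtain ⟨y, hy⟩ := hindu (t' * t)
        refine ⟨y, fun hc => hy ?_⟩
        rw [hc, ht y]; ring
      rw [e1, e2]
  -- equal gradients of ω force equal gradients of g
  have DegEq : ∀ v w : Fin d → ℝ, v ≠ 0 → w ≠ 0 →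
      (∀ y, fderiv ℝ ω v y = fderiv ℝ ω w y) →
      ∀ y, fderiv ℝ g v y = fderiv ℝ g w y := by
    intro v w hv hw heq
    obtain ⟨z1, hz1, hz1'⟩ := E2 (fderiv ℝ ω v) 0
    have hA : ∃ y, fderiv ℝ ω v y ≠ fderiv ℝ ω z1 y := by
      obtain ⟨y, hy⟩ := hz1' 0
      exact ⟨y, fun hc => hy (by rw [← hc]; simp)⟩
    obtain ⟨z2, hz2, hz2'⟩ := E2 (fderiv ℝ ω v) (fderiv ℝ ω v - fderiv ℝ ω z1)
    have hB : ∃ y, fderiv ℝ ω v y ≠ fderiv ℝ ω z2 y := by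
      obtain ⟨y, hy⟩ := hz2' 0
      exact ⟨y, fun hc => hy (by rw [← hc]; ring)⟩
    have hind12 : ∀ t : ℝ, ∃ y, fderiv ℝ ω v y - fderiv ℝ ω z2 y
        ≠ t * (fderiv ℝ ω v y - fderiv ℝ ω z1 y) := by
      intro t
      obtain ⟨y, hy⟩ := hz2' (-t)
      refine ⟨y, fun hc => hy ?_⟩
      simp only [ContinuousLinearMap.sub_apply]
      linarith [hc]
    have hA' : ∃ y, fderiv ℝ ω w y ≠ fderiv ℝ ω z1 y := by
      obtain ⟨y, hy⟩ := hA; exact ⟨y, by rw [← heq y]; exact hy⟩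
    have hB' : ∃ y, fderiv ℝ ω w y ≠ fderiv ℝ ω z2 y := by
      obtain ⟨y, hy⟩ := hB; exact ⟨y, by rw [← heq y]; exact hy⟩
    obtain ⟨a1, ha1⟩ := ParF v z1 hv hz1 hA
    obtain ⟨b1, hb1⟩ := ParF w z1 hw hz1 hA'
    obtain ⟨a2, ha2⟩ := ParF v z2 hv hz2 hB
    obtain ⟨b2, hb2⟩ := ParF w z2 hw hz2 hB'
    have hrep1 : ∀ y, fderiv ℝ g v y - fderiv ℝ g w y
        = (a1 - b1) * (fderiv ℝ ω v y - fderiv ℝ ω z1 y) := by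
      intro y
      linear_combination ha1 y - hb1 y + (b1 - b1) * heq y + b1 * heq y
    have hrep2 : ∀ y, fderiv ℝ g v y - fderiv ℝ g w y
        = (a2 - b2) * (fderiv ℝ ω v y - fderiv ℝ ω z2 y) := by
      intro y
      linear_combination ha2 y - hb2 y + b2 * heq y
    by_cases hab : a2 = b2
    · intro y
      have := hrep2 y
      rw [hab] at this
      simpa [sub_eq_zero] using this
    · exfalso
      obtain ⟨y, hy⟩ := hind12 ((a1 - b1) / (a2 - b2))
      apply hy
      have h1 := hrep1 y
      have h2 := hrep2 y
      have hne0 : a2 - b2 ≠ 0 := sub_ne_zero.2 hab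
      rw [div_mul_eq_mul_div, eq_div_iff hne0]
      linear_combination h1 - h2
  -- a base nondegenerate pair
  set v₁ : Fin d → ℝ := Pi.single i 1 with hv₁def
  have hv₁ : v₁ ≠ 0 := by
    intro hc
    have := congrFun hc i
    simp [hv₁def, Pi.single_eq_same] at this
  obtain ⟨w₁, hw₁, hw₁'⟩ := E2 (fderiv ℝ ω v₁) 0
  have hvw₁ : ∃ y, fderiv ℝ ω v₁ y ≠ fderiv ℝ ω w₁ y := by
    obtain ⟨y, hy⟩ := hw₁' 0
    exact ⟨y, fun hc => hy (by rw [← hc]; simp)⟩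
  obtain ⟨cst, hcst⟩ := ParF v₁ w₁ hv₁ hw₁ hvw₁
  have GOAL1 : ∀ (v w : Fin d → ℝ) (c : ℝ), v ≠ 0 → w ≠ 0 →
      (∀ y, fderiv ℝ g v y - fderiv ℝ g w y = c * (fderiv ℝ ω v y - fderiv ℝ ω w y)) →
      (∃ y, fderiv ℝ ω v y ≠ fderiv ℝ ω w y) → c = cst := by
    intro v w c hv hw hP hvw
    by_cases hvv : ∃ y, fderiv ℝ ω v y ≠ fderiv ℝ ω v₁ y
    · obtain ⟨c'', hc''⟩ := ParF v v₁ hv hv₁ hvv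
      have e1 : c = c'' := Key v w v₁ c c'' hv hw hv₁ hP hc'' hvw hvv
      have hsym : ∀ y, fderiv ℝ g v₁ y - fderiv ℝ g v y
          = c'' * (fderiv ℝ ω v₁ y - fderiv ℝ ω v y) := by
        intro y; linear_combination -(hc'' y)
      have hvv' : ∃ y, fderiv ℝ ω v₁ y ≠ fderiv ℝ ω v y := by
        obtain ⟨y, hy⟩ := hvv; exact ⟨y, hy.symm⟩
      have e2 : c'' = cst := Key v₁ v w₁ c'' cst hv₁ hv hw₁ hsym hcst hvv' hvw₁
      rw [e1, e2]
    · push_neg at hvv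
      have hvw₁' : ∃ y, fderiv ℝ ω v y ≠ fderiv ℝ ω w₁ y := by
        obtain ⟨y, hy⟩ := hvw₁; exact ⟨y, by rw [hvv y]; exact hy⟩
      obtain ⟨c'', hc''⟩ := ParF v w₁ hv hw₁ hvw₁'
      have e1 : c = c'' := Key v w w₁ c c'' hv hw hw₁ hP hc'' hvw hvw₁'
      have hsymc : ∀ y, fderiv ℝ g w₁ y - fderiv ℝ g v y
          = c'' * (fderiv ℝ ω w₁ y - fderiv ℝ ω v y) := by
        intro y; linear_combination -(hc'' y)
      have hsymcst : ∀ y, fderiv ℝ g w₁ y - fderiv ℝ g v₁ y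
          = cst * (fderiv ℝ ω w₁ y - fderiv ℝ ω v₁ y) := by
        intro y; linear_combination -(hcst y)
      have hne1 : ∃ y, fderiv ℝ ω w₁ y ≠ fderiv ℝ ω v y := by
        obtain ⟨y, hy⟩ := hvw₁'; exact ⟨y, hy.symm⟩
      have hne2 : ∃ y, fderiv ℝ ω w₁ y ≠ fderiv ℝ ω v₁ y := by
        obtain ⟨y, hy⟩ := hvw₁; exact ⟨y, hy.symm⟩
      have e2 : c'' = cst := Key w₁ v v₁ c'' cst hw₁ hv hv₁ hsymc hsymcst hne1 hne2
      rw [e1, e2]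
  have GOAL2 : ∀ v w : Fin d → ℝ, v ≠ 0 → w ≠ 0 →
      ∀ y, fderiv ℝ g v y - fderiv ℝ g w y = cst * (fderiv ℝ ω v y - fderiv ℝ ω w y) := by
    intro v w hv hw
    by_cases hnd : ∃ y, fderiv ℝ ω v y ≠ fderiv ℝ ω w y
    · obtain ⟨c, hc⟩ := ParF v w hv hw hnd
      intro y
      rw [← GOAL1 v w c hv hw hc hnd]
      exact hc y
    · push_neg at hnd
      intro y
      rw [DegEq v w hv hw hnd y, hnd y]
      ring
  -- integration
  set bmap : (Fin d → ℝ) →L[ℝ] ℝ := fderiv ℝ g v₁ - cst • fderiv ℝ ω v₁ with hbmap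
  have hDg : ∀ v : Fin d → ℝ, v ≠ 0 →
      ∀ y, fderiv ℝ g v y = bmap y + cst * fderiv ℝ ω v y := by
    intro v hv y
    have h2 := GOAL2 v v₁ hv hv₁ y
    simp only [hbmap, ContinuousLinearMap.sub_apply, ContinuousLinearMap.smul_apply,
      smul_eq_mul]
    linarith [h2]
  set h : (Fin d → ℝ) → ℝ := fun v => g v - cst * ω v - bmap v with hh
  have hSo : IsOpen {v : Fin d → ℝ | v ≠ 0} := isOpen_compl_singleton
  have hderiv : ∀ v : Fin d → ℝ, v ≠ 0 →
      HasFDerivAt h (0 : (Fin d → ℝ) →L[ℝ] ℝ) v := by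
    intro v hv
    have hvS := hSo.mem_nhds hv
    have hgv : HasFDerivAt g (fderiv ℝ g v) v :=
      ((hg.contDiffAt hvS).differentiableAt one_ne_zero).hasFDerivAt
    have hωv : HasFDerivAt ω (fderiv ℝ ω v) v :=
      ((hω.contDiffAt hvS).differentiableAt (by norm_num)).hasFDerivAt
    have hcomb := (hgv.sub (hωv.const_mul cst)).sub bmap.hasFDerivAt
    refine hcomb.congr_fderiv ?_
    ext y
    have := hDg v hv y
    simp only [ContinuousLinearMap.sub_apply, ContinuousLinearMap.smul_apply,
      smul_eq_mul, ContinuousLinearMap.zero_apply]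
    linarith [hDg v hv y]
  have hrank : 1 < Module.rank ℝ (Fin d → ℝ) := by
    rw [rank_fin_fun]
    have : 1 < d := by rcases hd with h2 | h3 <;> omega
    exact_mod_cast Nat.one_lt_cast.2 this
  have hpc : IsPathConnected ({(0 : Fin d → ℝ)}ᶜ : Set (Fin d → ℝ)) :=
    isPathConnected_compl_singleton_of_one_lt_rank hrank 0
  have hseq : {v : Fin d → ℝ | v ≠ 0} = ({(0 : Fin d → ℝ)}ᶜ : Set (Fin d → ℝ)) := by
    ext x; simp
  have hprec : IsPreconnected {v : Fin d → ℝ | v ≠ 0} := by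
    rw [hseq]
    exact hpc.isConnected.isPreconnected
  haveI : PreconnectedSpace {v : Fin d → ℝ | v ≠ 0} := Subtype.preconnectedSpace hprec
  have hlc : IsLocallyConstant (fun p : {v : Fin d → ℝ | v ≠ 0} => h p.val) := by
    rw [IsLocallyConstant.iff_eventually_eq]
    intro p
    obtain ⟨ε, hε, hball⟩ := Metric.isOpen_iff.1 hSo p.val p.2
    have hconst : ∀ x ∈ Metric.ball p.val ε, h x = h p.val := by
      intro x hx
      refine (convex_ball _ _).is_const_of_fderivWithin_eq_zero (𝕜 := ℝ) (f := h) ?_ ?_ hx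
        (Metric.mem_ball_self hε)
      · intro x' hx'
        exact ((hderiv x' (hball hx')).differentiableAt).differentiableWithinAt
      · intro x' hx'
        rw [fderivWithin_of_isOpen Metric.isOpen_ball hx']
        exact (hderiv x' (hball hx')).fderiv
    have hmem : Metric.ball p.val ε ∈ 𝓝 (p.val) := Metric.ball_mem_nhds _ hε
    have hev : ∀ᶠ q : {v : Fin d → ℝ | v ≠ 0} in 𝓝 p,
        (q : Fin d → ℝ) ∈ Metric.ball p.val ε :=
      (continuous_subtype_val.tendsto p).eventually hmem
    filter_upwards [hev] with q hq using hconst q.val hq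
  refine ⟨h v₁, cst, fun k => bmap (Pi.single k 1), ?_⟩
  intro v hv
  have hhv : h v = h v₁ :=
    hlc.apply_eq_of_preconnectedSpace ⟨v, hv⟩ ⟨v₁, hv₁⟩
  have hbv : bmap v = ∑ k, bmap (Pi.single k 1) * v k := by
    have hb := LinearMap.pi_apply_eq_sum_univ (bmap : (Fin d → ℝ) →ₗ[ℝ] ℝ) v
    simp only [ContinuousLinearMap.coe_coe] at hb
    rw [hb]
    refine Finset.sum_congr rfl fun k _ => ?_
    have : (fun j => if k = j then (1:ℝ) else 0) = Pi.single k 1 := by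
      ext j; simp [Pi.single_apply, eq_comm]
    rw [this, smul_eq_mul, mul_comm]
  have hhvdef : h v = g v - cst * ω v - bmap v := rfl
  rw [hhv] at hhvdef
  rw [← hbv]
  linarith [hhvdef]
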